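/- Let B be a collision kernel on ℕ⁴ with K := sup_{ε,ε*} ∑_{ε',ε'*} B(ε,ε*,ε',ε'*) < ∞. Then the discrete homogeneous Boltzmann equation ∂_t f_t(ε) = ∑_{ε*,ε',ε'*} B[f_t(ε')f_t(ε'*) − f_t(ε)f_t(ε*)] (with B symmetric in collisions, B(ε,ε*,ε',ε'*) = B(ε',ε'*,ε,ε*)) has at most one solution in C([0,T]; ℓ¹(ℕ)) with a given probability initial datum, without assuming energy conservation. -/

import Mathlib

set_option maxHeartbeats 1000000

open scoped ENNReal

/-- The collision operator associated to a kernel `B`. -/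
noncomputable def collOp (B : ℕ → ℕ → ℕ → ℕ → ℝ) (g : ℕ → ℝ) (ε : ℕ) : ℝ :=
  ∑' q : ℕ × ℕ × ℕ, B ε q.1 q.2.1 q.2.2 * (g q.2.1 * g q.2.2 - g ε * g q.1)

namespace BoltzAux

variable {Bc : ℕ → ℕ → ℕ → ℕ → ℝ≥0∞} {KE : ℝ≥0∞}

lemma slice_le (G : ℕ → ℕ → ℝ≥0∞) (x : ℕ) :
    ∑' y, G x y ≤ ∑' p : ℕ × ℕ, G p.1 p.2 := by
  rw [ENNReal.tsum_prod']
  exact ENNReal.le_tsum x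

lemma tsum3 (F : ℕ → ℕ → ℕ → ℝ≥0∞) :
    ∑' q : ℕ × ℕ × ℕ, F q.1 q.2.1 q.2.2 = ∑' a, ∑' c, ∑' d, F a c d := by
  rw [ENNReal.tsum_prod']
  exact tsum_congr fun a => ENNReal.tsum_prod'

lemma rowsum_le (hsym : ∀ a b c d, Bc a b c d = Bc c d a b)
    (hrow : ∀ a b, ∑' p : ℕ × ℕ, Bc a b p.1 p.2 ≤ KE)
    (ε c d : ℕ) : ∑' a, Bc ε a c d ≤ KE :=
  calc ∑' a, Bc ε a c d = ∑' a, Bc c d ε a := tsum_congr fun a => by rw [hsym]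
    _ ≤ ∑' p : ℕ × ℕ, Bc c d p.1 p.2 := slice_le _ ε
    _ ≤ KE := hrow c d

lemma gain_pt (hsym : ∀ a b c d, Bc a b c d = Bc c d a b)
    (hrow : ∀ a b, ∑' p : ℕ × ℕ, Bc a b p.1 p.2 ≤ KE)
    (u v : ℕ → ℝ≥0∞) (ε : ℕ) :
    ∑' q : ℕ × ℕ × ℕ, Bc ε q.1 q.2.1 q.2.2 * (u q.2.1 * v q.2.2)
      ≤ (∑' x, u x) * (∑' x, v x) * KE := by
  calc ∑' q : ℕ × ℕ × ℕ, Bc ε q.1 q.2.1 q.2.2 * (u q.2.1 * v q.2.2)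
      = ∑' a, ∑' c, ∑' d, Bc ε a c d * (u c * v d) :=
        tsum3 (fun a c d => Bc ε a c d * (u c * v d))
    _ = ∑' c, ∑' d, ∑' a, Bc ε a c d * (u c * v d) := by
        rw [ENNReal.tsum_comm (f := fun a c => ∑' d, Bc ε a c d * (u c * v d))]
        exact tsum_congr fun c => ENNReal.tsum_comm
    _ ≤ ∑' c, ∑' d, KE * (u c * v d) := by
        refine ENNReal.tsum_le_tsum fun c => ENNReal.tsum_le_tsum fun d => ?_
        rw [ENNReal.tsum_mul_right]
        exact mul_le_mul_left (rowsum_le hsym hrow ε c d) _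
    _ = (∑' x, u x) * (∑' x, v x) * KE := by
        have h : ∀ c d : ℕ, KE * (u c * v d) = u c * (v d * KE) := fun c d => by ring
        simp_rw [h, ENNReal.tsum_mul_left, ENNReal.tsum_mul_right, mul_assoc]

lemma loss_pt (hrow : ∀ a b, ∑' p : ℕ × ℕ, Bc a b p.1 p.2 ≤ KE)
    (u v : ℕ → ℝ≥0∞) (ε : ℕ) :
    ∑' q : ℕ × ℕ × ℕ, Bc ε q.1 q.2.1 q.2.2 * (u ε * v q.1)
      ≤ u ε * (∑' x, v x) * KE := by
  calc ∑' q : ℕ × ℕ × ℕ, Bc ε q.1 q.2.1 q.2.2 * (u ε * v q.1)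
      = ∑' a, ∑' p : ℕ × ℕ, Bc ε a p.1 p.2 * (u ε * v a) := ENNReal.tsum_prod'
    _ = ∑' a, (∑' p : ℕ × ℕ, Bc ε a p.1 p.2) * (u ε * v a) := by
        simp_rw [ENNReal.tsum_mul_right]
    _ ≤ ∑' a, KE * (u ε * v a) := by
        exact ENNReal.tsum_le_tsum fun a => mul_le_mul_left (hrow ε a) _
    _ = u ε * (∑' x, v x) * KE := by
        have h : ∀ a : ℕ, KE * (u ε * v a) = u ε * (v a * KE) := fun a => by ring
        simp_rw [h, ENNReal.tsum_mul_left, ENNReal.tsum_mul_right, mul_assoc]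

lemma gain_sum (hsym : ∀ a b c d, Bc a b c d = Bc c d a b)
    (hrow : ∀ a b, ∑' p : ℕ × ℕ, Bc a b p.1 p.2 ≤ KE)
    (u v : ℕ → ℝ≥0∞) :
    ∑' ε, ∑' q : ℕ × ℕ × ℕ, Bc ε q.1 q.2.1 q.2.2 * (u q.2.1 * v q.2.2)
      ≤ (∑' x, u x) * (∑' x, v x) * KE := by
  calc ∑' ε, ∑' q : ℕ × ℕ × ℕ, Bc ε q.1 q.2.1 q.2.2 * (u q.2.1 * v q.2.2)
      = ∑' ε, ∑' a, ∑' c, ∑' d, Bc ε a c d * (u c * v d) :=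
        tsum_congr fun ε => tsum3 (fun a c d => Bc ε a c d * (u c * v d))
    _ = ∑' ε, ∑' c, ∑' a, ∑' d, Bc ε a c d * (u c * v d) :=
        tsum_congr fun ε => ENNReal.tsum_comm
    _ = ∑' c, ∑' ε, ∑' a, ∑' d, Bc ε a c d * (u c * v d) := ENNReal.tsum_comm
    _ = ∑' c, ∑' ε, ∑' d, ∑' a, Bc ε a c d * (u c * v d) :=
        tsum_congr fun c => tsum_congr fun ε => ENNReal.tsum_comm
    _ = ∑' c, ∑' d, ∑' ε, ∑' a, Bc ε a c d * (u c * v d) :=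
        tsum_congr fun c => ENNReal.tsum_comm
    _ ≤ ∑' c, ∑' d, KE * (u c * v d) := by
        refine ENNReal.tsum_le_tsum fun c => ENNReal.tsum_le_tsum fun d => ?_
        simp_rw [ENNReal.tsum_mul_right]
        refine mul_le_mul_left ?_ _
        calc ∑' ε, ∑' a, Bc ε a c d = ∑' ε, ∑' a, Bc c d ε a :=
              tsum_congr fun ε => tsum_congr fun a => by rw [hsym]
          _ = ∑' p : ℕ × ℕ, Bc c d p.1 p.2 := by exact (ENNReal.tsum_prod' (f := fun p : ℕ × ℕ => Bc c d p.1 p.2)).symm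
          _ ≤ KE := hrow c d
    _ = (∑' x, u x) * (∑' x, v x) * KE := by
        have h : ∀ c d : ℕ, KE * (u c * v d) = u c * (v d * KE) := fun c d => by ring
        simp_rw [h, ENNReal.tsum_mul_left, ENNReal.tsum_mul_right, mul_assoc]

lemma loss_sum (hrow : ∀ a b, ∑' p : ℕ × ℕ, Bc a b p.1 p.2 ≤ KE)
    (u v : ℕ → ℝ≥0∞) :
    ∑' ε, ∑' q : ℕ × ℕ × ℕ, Bc ε q.1 q.2.1 q.2.2 * (u ε * v q.1)
      ≤ (∑' x, u x) * (∑' x, v x) * KE := by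
  calc ∑' ε, ∑' q : ℕ × ℕ × ℕ, Bc ε q.1 q.2.1 q.2.2 * (u ε * v q.1)
      ≤ ∑' ε, u ε * (∑' x, v x) * KE :=
        ENNReal.tsum_le_tsum fun ε => loss_pt hrow u v ε
    _ = (∑' x, u x) * (∑' x, v x) * KE := by
        simp_rw [mul_assoc, ENNReal.tsum_mul_right]

end BoltzAux

namespace BoltzAux2

open BoltzAux

variable {B : ℕ → ℕ → ℕ → ℕ → ℝ} {K : ℝ}

lemma rowE (hB0 : ∀ a b c d, 0 ≤ B a b c d)
    (hBsumm : ∀ a b, Summable (fun p : ℕ × ℕ => B a b p.1 p.2))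
    (hK : ∀ a b, ∑' p : ℕ × ℕ, B a b p.1 p.2 ≤ K) (a b : ℕ) :
    ∑' p : ℕ × ℕ, ENNReal.ofReal (B a b p.1 p.2) ≤ ENNReal.ofReal K := by
  rw [← ENNReal.ofReal_tsum_of_nonneg (f := fun p : ℕ × ℕ => B a b p.1 p.2) (fun p => hB0 a b p.1 p.2) (hBsumm a b)]
  exact ENNReal.ofReal_le_ofReal (hK a b)

lemma symE (hBsym : ∀ a b c d, B a b c d = B c d a b) :
    ∀ a b c d, ENNReal.ofReal (B a b c d) = ENNReal.ofReal (B c d a b) :=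
  fun a b c d => by rw [hBsym]

lemma ofReal_tsum_eq (F : ℕ → ℝ) (hF0 : ∀ x, 0 ≤ F x) (hFs : Summable F) :
    ∑' x, ENNReal.ofReal (F x) = ENNReal.ofReal (∑' x, F x) :=
  (ENNReal.ofReal_tsum_of_nonneg hF0 hFs).symm

/-- Summability of the collision integrand for a nonnegative summable `F`. -/
lemma term_summable (hB0 : ∀ a b c d, 0 ≤ B a b c d)
    (hBsym : ∀ a b c d, B a b c d = B c d a b)
    (hBsumm : ∀ a b, Summable (fun p : ℕ × ℕ => B a b p.1 p.2))
    (hK : ∀ a b, ∑' p : ℕ × ℕ, B a b p.1 p.2 ≤ K)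
    (F : ℕ → ℝ) (hF0 : ∀ x, 0 ≤ F x) (hFs : Summable F) (ε : ℕ) :
    Summable (fun q : ℕ × ℕ × ℕ =>
      B ε q.1 q.2.1 q.2.2 * (F q.2.1 * F q.2.2 - F ε * F q.1)) := by
  set W : ℕ × ℕ × ℕ → ℝ := fun q =>
    B ε q.1 q.2.1 q.2.2 * (F q.2.1 * F q.2.2 + F ε * F q.1) with hW
  have hW0 : ∀ q, 0 ≤ W q := fun q => mul_nonneg (hB0 _ _ _ _)
    (add_nonneg (mul_nonneg (hF0 _) (hF0 _)) (mul_nonneg (hF0 _) (hF0 _)))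
  -- the ENNReal sum of W is finite
  have hWE : ∀ q : ℕ × ℕ × ℕ, ENNReal.ofReal (W q) =
      ENNReal.ofReal (B ε q.1 q.2.1 q.2.2) *
        (ENNReal.ofReal (F q.2.1) * ENNReal.ofReal (F q.2.2)) +
      ENNReal.ofReal (B ε q.1 q.2.1 q.2.2) *
        (ENNReal.ofReal (F ε) * ENNReal.ofReal (F q.1)) := by
    intro q
    rw [hW]
    rw [ENNReal.ofReal_mul (hB0 _ _ _ _),
      ENNReal.ofReal_add (mul_nonneg (hF0 _) (hF0 _)) (mul_nonneg (hF0 _) (hF0 _)),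
      ENNReal.ofReal_mul (hF0 q.2.1), ENNReal.ofReal_mul (hF0 ε), mul_add]
  have hfin : ∑' q, ENNReal.ofReal (W q) ≠ ∞ := by
    rw [tsum_congr hWE, ENNReal.tsum_add]
    have h1 := gain_pt (Bc := fun a b c d => ENNReal.ofReal (B a b c d))
      (symE hBsym) (rowE hB0 hBsumm hK) (fun x => ENNReal.ofReal (F x))
      (fun x => ENNReal.ofReal (F x)) ε
    have h2 := loss_pt (Bc := fun a b c d => ENNReal.ofReal (B a b c d))
      (rowE hB0 hBsumm hK) (fun x => ENNReal.ofReal (F x))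
      (fun x => ENNReal.ofReal (F x)) ε
    have hsum : (∑' x, ENNReal.ofReal (F x)) ≠ ∞ := by
      rw [ofReal_tsum_eq F hF0 hFs]; exact ENNReal.ofReal_ne_top
    intro htop
    have : (∑' x, ENNReal.ofReal (F x)) * (∑' x, ENNReal.ofReal (F x)) *
        ENNReal.ofReal K + ENNReal.ofReal (F ε) * (∑' x, ENNReal.ofReal (F x)) *
        ENNReal.ofReal K = ∞ := top_le_iff.mp (htop ▸ add_le_add h1 h2)
    rw [ENNReal.add_eq_top] at this
    rcases this with h | h
    · exact (ENNReal.mul_ne_top (ENNReal.mul_ne_top hsum hsum) ENNReal.ofReal_ne_top) h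
    · exact (ENNReal.mul_ne_top (ENNReal.mul_ne_top ENNReal.ofReal_ne_top hsum)
        ENNReal.ofReal_ne_top) h
  have hWsumm : Summable W := by
    have := ENNReal.summable_toReal hfin
    convert this using 2 with q
    rw [ENNReal.toReal_ofReal (hW0 q)]
  refine Summable.of_abs ?_
  refine hWsumm.of_nonneg_of_le (fun q => abs_nonneg _) fun q => ?_
  rw [hW, abs_mul, abs_of_nonneg (hB0 _ _ _ _)]
  refine mul_le_mul_of_nonneg_left ?_ (hB0 _ _ _ _)
  refine (abs_sub _ _).trans ?_
  rw [abs_of_nonneg (mul_nonneg (hF0 _) (hF0 _)), abs_of_nonneg (mul_nonneg (hF0 _) (hF0 _))]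

/-- Pointwise bound `|Q(F)(ε)| ≤ 2K` for a sub-probability `F`. -/
lemma collOp_abs_le (hB0 : ∀ a b c d, 0 ≤ B a b c d)
    (hBsym : ∀ a b c d, B a b c d = B c d a b)
    (hBsumm : ∀ a b, Summable (fun p : ℕ × ℕ => B a b p.1 p.2))
    (hK : ∀ a b, ∑' p : ℕ × ℕ, B a b p.1 p.2 ≤ K) (hK0 : 0 ≤ K)
    (F : ℕ → ℝ) (hF0 : ∀ x, 0 ≤ F x) (hFs : Summable F) (hF1 : ∑' x, F x ≤ 1)
    (ε : ℕ) : |collOp B F ε| ≤ 2 * K := by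
  have hterm := term_summable hB0 hBsym hBsumm hK F hF0 hFs ε
  set uF : ℕ → ℝ≥0∞ := fun x => ENNReal.ofReal (F x) with huF
  have hsF : (∑' x, uF x) ≤ 1 := by
    rw [huF, ofReal_tsum_eq F hF0 hFs, ← ENNReal.ofReal_one]
    exact ENNReal.ofReal_le_ofReal hF1
  have key : ENNReal.ofReal |collOp B F ε| ≤ ENNReal.ofReal (2 * K) := by
    calc ENNReal.ofReal |collOp B F ε|
        ≤ ENNReal.ofReal (∑' q : ℕ × ℕ × ℕ, |B ε q.1 q.2.1 q.2.2 *
            (F q.2.1 * F q.2.2 - F ε * F q.1)|) := by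
          refine ENNReal.ofReal_le_ofReal ?_
          simpa only [Real.norm_eq_abs, collOp] using
            norm_tsum_le_tsum_norm (f := fun q : ℕ × ℕ × ℕ => B ε q.1 q.2.1 q.2.2 *
              (F q.2.1 * F q.2.2 - F ε * F q.1)) (by simpa only [Real.norm_eq_abs] using hterm.abs)
      _ = ∑' q : ℕ × ℕ × ℕ, ENNReal.ofReal (|B ε q.1 q.2.1 q.2.2 *
            (F q.2.1 * F q.2.2 - F ε * F q.1)|) :=
          ENNReal.ofReal_tsum_of_nonneg (fun q => abs_nonneg _) hterm.abs
      _ ≤ ∑' q : ℕ × ℕ × ℕ,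
            (ENNReal.ofReal (B ε q.1 q.2.1 q.2.2) * (uF q.2.1 * uF q.2.2) +
             ENNReal.ofReal (B ε q.1 q.2.1 q.2.2) * (uF ε * uF q.1)) := by
          refine ENNReal.tsum_le_tsum fun q => ?_
          have habs : |B ε q.1 q.2.1 q.2.2 * (F q.2.1 * F q.2.2 - F ε * F q.1)|
              ≤ B ε q.1 q.2.1 q.2.2 * (F q.2.1 * F q.2.2 + F ε * F q.1) := by
            rw [abs_mul, abs_of_nonneg (hB0 _ _ _ _)]
            refine mul_le_mul_of_nonneg_left ?_ (hB0 _ _ _ _)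
            refine (abs_sub _ _).trans ?_
            rw [abs_of_nonneg (mul_nonneg (hF0 _) (hF0 _)),
              abs_of_nonneg (mul_nonneg (hF0 _) (hF0 _))]
          refine (ENNReal.ofReal_le_ofReal habs).trans (le_of_eq ?_)
          rw [ENNReal.ofReal_mul (hB0 _ _ _ _),
            ENNReal.ofReal_add (mul_nonneg (hF0 _) (hF0 _)) (mul_nonneg (hF0 _) (hF0 _)),
            ENNReal.ofReal_mul (hF0 q.2.1), ENNReal.ofReal_mul (hF0 ε), mul_add]
      _ ≤ (∑' x, uF x) * (∑' x, uF x) * ENNReal.ofReal K +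
            uF ε * (∑' x, uF x) * ENNReal.ofReal K := by
          rw [ENNReal.tsum_add]
          exact add_le_add
            (gain_pt (Bc := fun a b c d => ENNReal.ofReal (B a b c d)) (symE hBsym) (rowE hB0 hBsumm hK) uF uF ε)
            (loss_pt (Bc := fun a b c d => ENNReal.ofReal (B a b c d)) (rowE hB0 hBsumm hK) uF uF ε)
      _ ≤ 1 * 1 * ENNReal.ofReal K + 1 * 1 * ENNReal.ofReal K := by
          have huFe : uF ε ≤ 1 := le_trans (ENNReal.le_tsum ε) hsF
          gcongr
      _ = ENNReal.ofReal (2 * K) := by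
          rw [two_mul, ENNReal.ofReal_add hK0 hK0]
          simp
  exact (ENNReal.ofReal_le_ofReal_iff (by linarith)).mp key

/-- The key `ℓ¹` estimate: `‖Q(F) − Q(G)‖₁ ≤ 4K ‖F − G‖₁` for probabilities. -/
lemma est_sum (hB0 : ∀ a b c d, 0 ≤ B a b c d)
    (hBsym : ∀ a b c d, B a b c d = B c d a b)
    (hBsumm : ∀ a b, Summable (fun p : ℕ × ℕ => B a b p.1 p.2))
    (hK : ∀ a b, ∑' p : ℕ × ℕ, B a b p.1 p.2 ≤ K)
    (F G : ℕ → ℝ) (hF0 : ∀ x, 0 ≤ F x) (hFs : Summable F) (hF1 : ∑' x, F x ≤ 1)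
    (hG0 : ∀ x, 0 ≤ G x) (hGs : Summable G) (hG1 : ∑' x, G x ≤ 1) :
    ∑' ε, ENNReal.ofReal |collOp B F ε - collOp B G ε|
      ≤ ENNReal.ofReal (4 * K) * ∑' x, ENNReal.ofReal |F x - G x| := by
  set uF : ℕ → ℝ≥0∞ := fun x => ENNReal.ofReal (F x) with huF
  set uG : ℕ → ℝ≥0∞ := fun x => ENNReal.ofReal (G x) with huG
  set D : ℕ → ℝ≥0∞ := fun x => ENNReal.ofReal |F x - G x| with hD
  have hsF : (∑' x, uF x) ≤ 1 := by
    rw [huF, ofReal_tsum_eq F hF0 hFs, ← ENNReal.ofReal_one]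
    exact ENNReal.ofReal_le_ofReal hF1
  have hsG : (∑' x, uG x) ≤ 1 := by
    rw [huG, ofReal_tsum_eq G hG0 hGs, ← ENNReal.ofReal_one]
    exact ENNReal.ofReal_le_ofReal hG1
  have htF := fun ε => term_summable hB0 hBsym hBsumm hK F hF0 hFs ε
  have htG := fun ε => term_summable hB0 hBsym hBsumm hK G hG0 hGs ε
  -- pointwise bound
  have hpt : ∀ ε, ENNReal.ofReal |collOp B F ε - collOp B G ε| ≤
      (∑' q : ℕ × ℕ × ℕ, ENNReal.ofReal (B ε q.1 q.2.1 q.2.2) * (D q.2.1 * uG q.2.2)) +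
      (∑' q : ℕ × ℕ × ℕ, ENNReal.ofReal (B ε q.1 q.2.1 q.2.2) * (uF q.2.1 * D q.2.2)) +
      (∑' q : ℕ × ℕ × ℕ, ENNReal.ofReal (B ε q.1 q.2.1 q.2.2) * (D ε * uG q.1)) +
      (∑' q : ℕ × ℕ × ℕ, ENNReal.ofReal (B ε q.1 q.2.1 q.2.2) * (uF ε * D q.1)) := by
    intro ε
    have hdiff : collOp B F ε - collOp B G ε =
        ∑' q : ℕ × ℕ × ℕ, (B ε q.1 q.2.1 q.2.2 * (F q.2.1 * F q.2.2 - F ε * F q.1)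
          - B ε q.1 q.2.1 q.2.2 * (G q.2.1 * G q.2.2 - G ε * G q.1)) :=
      (Summable.tsum_sub (htF ε) (htG ε)).symm
    have hsub := (htF ε).sub (htG ε)
    calc ENNReal.ofReal |collOp B F ε - collOp B G ε|
        ≤ ENNReal.ofReal (∑' q : ℕ × ℕ × ℕ,
            |B ε q.1 q.2.1 q.2.2 * (F q.2.1 * F q.2.2 - F ε * F q.1)
              - B ε q.1 q.2.1 q.2.2 * (G q.2.1 * G q.2.2 - G ε * G q.1)|) := by
          rw [hdiff]
          refine ENNReal.ofReal_le_ofReal ?_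
          have hn := norm_tsum_le_tsum_norm (f := fun q : ℕ × ℕ × ℕ =>
            B ε q.1 q.2.1 q.2.2 * (F q.2.1 * F q.2.2 - F ε * F q.1)
              - B ε q.1 q.2.1 q.2.2 * (G q.2.1 * G q.2.2 - G ε * G q.1))
            (by simpa only [Real.norm_eq_abs] using hsub.abs)
          simpa only [Real.norm_eq_abs] using hn
      _ = ∑' q : ℕ × ℕ × ℕ, ENNReal.ofReal
            (|B ε q.1 q.2.1 q.2.2 * (F q.2.1 * F q.2.2 - F ε * F q.1)
              - B ε q.1 q.2.1 q.2.2 * (G q.2.1 * G q.2.2 - G ε * G q.1)|) :=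
          ENNReal.ofReal_tsum_of_nonneg (fun q => abs_nonneg _) hsub.abs
      _ ≤ ∑' q : ℕ × ℕ × ℕ,
            (ENNReal.ofReal (B ε q.1 q.2.1 q.2.2) * (D q.2.1 * uG q.2.2) +
             ENNReal.ofReal (B ε q.1 q.2.1 q.2.2) * (uF q.2.1 * D q.2.2) +
             ENNReal.ofReal (B ε q.1 q.2.1 q.2.2) * (D ε * uG q.1) +
             ENNReal.ofReal (B ε q.1 q.2.1 q.2.2) * (uF ε * D q.1)) := by
          refine ENNReal.tsum_le_tsum fun q => ?_
          obtain ⟨a, c, d⟩ := q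
          simp only
          have habs : |B ε a c d * (F c * F d - F ε * F a)
              - B ε a c d * (G c * G d - G ε * G a)|
              ≤ B ε a c d * (|F c - G c| * G d + F c * |F d - G d|
                + (|F ε - G ε| * G a + F ε * |F a - G a|)) := by
            have e1 : B ε a c d * (F c * F d - F ε * F a)
                - B ε a c d * (G c * G d - G ε * G a)
                = B ε a c d * ((F c * F d - G c * G d) - (F ε * F a - G ε * G a)) := by ring
            rw [e1, abs_mul, abs_of_nonneg (hB0 _ _ _ _)]
            refine mul_le_mul_of_nonneg_left ?_ (hB0 _ _ _ _)
            refine (abs_sub _ _).trans (add_le_add ?_ ?_)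
            · have e2 : F c * F d - G c * G d = (F c - G c) * G d + F c * (F d - G d) := by
                ring
              rw [e2]
              refine (abs_add_le _ _).trans (le_of_eq ?_)
              rw [abs_mul, abs_mul, abs_of_nonneg (hG0 d), abs_of_nonneg (hF0 c)]
            · have e2 : F ε * F a - G ε * G a = (F ε - G ε) * G a + F ε * (F a - G a) := by
                ring
              rw [e2]
              refine (abs_add_le _ _).trans (le_of_eq ?_)
              rw [abs_mul, abs_mul, abs_of_nonneg (hG0 a), abs_of_nonneg (hF0 ε)]
          refine (ENNReal.ofReal_le_ofReal habs).trans (le_of_eq ?_)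
          have n1 : (0:ℝ) ≤ |F c - G c| * G d := mul_nonneg (abs_nonneg _) (hG0 d)
          have n2 : (0:ℝ) ≤ F c * |F d - G d| := mul_nonneg (hF0 c) (abs_nonneg _)
          have n3 : (0:ℝ) ≤ |F ε - G ε| * G a := mul_nonneg (abs_nonneg _) (hG0 a)
          have n4 : (0:ℝ) ≤ F ε * |F a - G a| := mul_nonneg (hF0 ε) (abs_nonneg _)
          rw [ENNReal.ofReal_mul (hB0 _ _ _ _), ENNReal.ofReal_add (add_nonneg n1 n2)
            (add_nonneg n3 n4), ENNReal.ofReal_add n1 n2, ENNReal.ofReal_add n3 n4,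
            ENNReal.ofReal_mul (abs_nonneg _), ENNReal.ofReal_mul (hF0 c),
            ENNReal.ofReal_mul (abs_nonneg _), ENNReal.ofReal_mul (hF0 ε)]
          simp only [hD, huF, huG]
          ring
      _ = _ := by
          rw [ENNReal.tsum_add, ENNReal.tsum_add, ENNReal.tsum_add]
  calc ∑' ε, ENNReal.ofReal |collOp B F ε - collOp B G ε|
      ≤ ∑' ε,
        ((∑' q : ℕ × ℕ × ℕ, ENNReal.ofReal (B ε q.1 q.2.1 q.2.2) * (D q.2.1 * uG q.2.2)) +
         (∑' q : ℕ × ℕ × ℕ, ENNReal.ofReal (B ε q.1 q.2.1 q.2.2) * (uF q.2.1 * D q.2.2)) +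
         (∑' q : ℕ × ℕ × ℕ, ENNReal.ofReal (B ε q.1 q.2.1 q.2.2) * (D ε * uG q.1)) +
         (∑' q : ℕ × ℕ × ℕ, ENNReal.ofReal (B ε q.1 q.2.1 q.2.2) * (uF ε * D q.1))) :=
        ENNReal.tsum_le_tsum hpt
    _ ≤ (∑' x, D x) * (∑' x, uG x) * ENNReal.ofReal K
        + (∑' x, uF x) * (∑' x, D x) * ENNReal.ofReal K
        + (∑' x, D x) * (∑' x, uG x) * ENNReal.ofReal K
        + (∑' x, uF x) * (∑' x, D x) * ENNReal.ofReal K := by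
        rw [ENNReal.tsum_add, ENNReal.tsum_add, ENNReal.tsum_add]
        exact add_le_add (add_le_add (add_le_add
          (gain_sum (Bc := fun a b c d => ENNReal.ofReal (B a b c d)) (symE hBsym) (rowE hB0 hBsumm hK) D uG)
          (gain_sum (Bc := fun a b c d => ENNReal.ofReal (B a b c d)) (symE hBsym) (rowE hB0 hBsumm hK) uF D))
          (loss_sum (Bc := fun a b c d => ENNReal.ofReal (B a b c d)) (rowE hB0 hBsumm hK) D uG))
          (loss_sum (Bc := fun a b c d => ENNReal.ofReal (B a b c d)) (rowE hB0 hBsumm hK) uF D)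
    _ ≤ (∑' x, D x) * 1 * ENNReal.ofReal K
        + 1 * (∑' x, D x) * ENNReal.ofReal K
        + (∑' x, D x) * 1 * ENNReal.ofReal K
        + 1 * (∑' x, D x) * ENNReal.ofReal K := by
        gcongr <;> first | exact hsF | exact hsG
    _ = ENNReal.ofReal (4 * K) * ∑' x, D x := by
        rw [ENNReal.ofReal_mul (by norm_num : (0:ℝ) ≤ 4), ENNReal.ofReal_ofNat]
        ring

lemma prob_summable (F : ℕ → ℝ) (h1 : ∑' x, F x = 1) : Summable F := by
  by_contra h; rw [tsum_eq_zero_of_not_summable h] at h1; norm_num at h1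

open MeasureTheory in
lemma collOp_aemeasurable (hB0 : ∀ a b c d, 0 ≤ B a b c d)
    (hBsym : ∀ a b c d, B a b c d = B c d a b)
    (hBsumm : ∀ a b, Summable (fun p : ℕ × ℕ => B a b p.1 p.2))
    (hK : ∀ a b, ∑' p : ℕ × ℕ, B a b p.1 p.2 ≤ K)
    (T : ℝ) (f : ℝ → ℕ → ℝ)
    (hfpos : ∀ t ∈ Set.Icc (0 : ℝ) T, ∀ x, 0 ≤ f t x)
    (hfmass : ∀ t ∈ Set.Icc (0 : ℝ) T, ∑' x : ℕ, f t x = 1)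
    (hfc : ∀ x : ℕ, ContinuousOn (fun s => f s x) (Set.Icc (0 : ℝ) T)) (ε : ℕ) :
    AEMeasurable (fun s => collOp B (f s) ε) (volume.restrict (Set.Icc (0 : ℝ) T)) := by
  set e : ℕ ≃ (ℕ × ℕ × ℕ) := (Denumerable.eqv (ℕ × ℕ × ℕ)).symm with he
  set P : ℕ → ℝ → ℝ := fun n s => ∑ i ∈ Finset.range n,
    B ε (e i).1 (e i).2.1 (e i).2.2 *
      (f s (e i).2.1 * f s (e i).2.2 - f s ε * f s (e i).1) with hP
  have hPm : ∀ n, AEMeasurable (P n) (volume.restrict (Set.Icc (0 : ℝ) T)) := by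
    intro n
    refine ContinuousOn.aemeasurable ?_ measurableSet_Icc
    refine continuousOn_finset_sum _ fun i _ => ?_
    exact continuousOn_const.mul
      (((hfc _).mul (hfc _)).sub ((hfc ε).mul (hfc _)))
  refine aemeasurable_of_tendsto_metrizable_ae Filter.atTop hPm ?_
  filter_upwards [ae_restrict_mem measurableSet_Icc] with s hs
  have hsumm := term_summable hB0 hBsym hBsumm hK (f s) (hfpos s hs)
    (prob_summable (f s) (hfmass s hs)) ε
  have h1 : HasSum ((fun q : ℕ × ℕ × ℕ => B ε q.1 q.2.1 q.2.2 *
      (f s q.2.1 * f s q.2.2 - f s ε * f s q.1)) ∘ e) (collOp B (f s) ε) :=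
    e.hasSum_iff.mpr hsumm.hasSum
  exact h1.tendsto_sum_nat
end BoltzAux2

open MeasureTheory BoltzAux2 in
/-- Uniqueness for the discrete homogeneous Boltzmann equation with a kernel
having bounded row sums: two probability-valued solutions on `[0,T]` with the
same initial datum coincide (no energy conservation assumed). -/
theorem boltzmann_uniqueness (T K : ℝ) (hT : 0 < T)
    (B : ℕ → ℕ → ℕ → ℕ → ℝ)
    (hB0 : ∀ a b c d, 0 ≤ B a b c d)
    (hBsym : ∀ a b c d, B a b c d = B c d a b)
    (hBsumm : ∀ a b, Summable (fun p : ℕ × ℕ => B a b p.1 p.2))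
    (hK : ∀ a b, ∑' p : ℕ × ℕ, B a b p.1 p.2 ≤ K)
    (f g : ℝ → ℕ → ℝ)
    (hfpos : ∀ t ∈ Set.Icc (0 : ℝ) T, ∀ ε, 0 ≤ f t ε)
    (hfmass : ∀ t ∈ Set.Icc (0 : ℝ) T, ∑' ε : ℕ, f t ε = 1)
    (hgpos : ∀ t ∈ Set.Icc (0 : ℝ) T, ∀ ε, 0 ≤ g t ε)
    (hgmass : ∀ t ∈ Set.Icc (0 : ℝ) T, ∑' ε : ℕ, g t ε = 1)
    (hfde : ∀ t ∈ Set.Icc (0 : ℝ) T, ∀ ε : ℕ,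
      HasDerivAt (fun s => f s ε) (collOp B (f t) ε) t)
    (hgde : ∀ t ∈ Set.Icc (0 : ℝ) T, ∀ ε : ℕ,
      HasDerivAt (fun s => g s ε) (collOp B (g t) ε) t)
    (hinit : f 0 = g 0) :
    ∀ t ∈ Set.Icc (0 : ℝ) T, f t = g t := by
  have hK0 : 0 ≤ K := le_trans (tsum_nonneg (fun p : ℕ × ℕ => hB0 0 0 p.1 p.2)) (hK 0 0)
  have hfS : ∀ t ∈ Set.Icc (0:ℝ) T, Summable (f t) := fun t ht =>
    prob_summable _ (hfmass t ht)
  have hgS : ∀ t ∈ Set.Icc (0:ℝ) T, Summable (g t) := fun t ht =>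
    prob_summable _ (hgmass t ht)
  have hfc : ∀ x : ℕ, ContinuousOn (fun s => f s x) (Set.Icc (0:ℝ) T) := fun x t ht =>
    ((hfde t ht x).continuousAt).continuousWithinAt
  have hgc : ∀ x : ℕ, ContinuousOn (fun s => g s x) (Set.Icc (0:ℝ) T) := fun x t ht =>
    ((hgde t ht x).continuousAt).continuousWithinAt
  have hQmf := fun ε => collOp_aemeasurable hB0 hBsym hBsumm hK T f hfpos hfmass hfc ε
  have hQmg := fun ε => collOp_aemeasurable hB0 hBsym hBsumm hK T g hgpos hgmass hgc ε
  have hint : ∀ (h : ℝ → ℕ → ℝ), (∀ t ∈ Set.Icc (0:ℝ) T, ∀ x, 0 ≤ h t x) →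
      (∀ t ∈ Set.Icc (0:ℝ) T, ∑' x, h t x = 1) →
      (∀ ε, AEMeasurable (fun s => collOp B (h s) ε) (volume.restrict (Set.Icc (0:ℝ) T))) →
      ∀ a b : ℝ, 0 ≤ a → a ≤ b → b ≤ T → ∀ ε,
        IntervalIntegrable (fun s => collOp B (h s) ε) volume a b := by
    intro h hp hm hQ a b ha hab hbT ε
    have hsub : Set.Ioc a b ⊆ Set.Icc 0 T := fun s hs => ⟨ha.trans hs.1.le, hs.2.trans hbT⟩
    rw [intervalIntegrable_iff_integrableOn_Ioc_of_le hab]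
    refine Integrable.mono' (g := fun _ => 2*K) (integrable_const _)
      ((hQ ε).mono_measure (Measure.restrict_mono hsub le_rfl)).aestronglyMeasurable ?_
    filter_upwards [ae_restrict_mem measurableSet_Ioc] with s hs
    rw [Real.norm_eq_abs]
    exact collOp_abs_le hB0 hBsym hBsumm hK hK0 (h s) (hp s (hsub hs))
      (prob_summable _ (hm s (hsub hs))) (le_of_eq (hm s (hsub hs))) ε
  set δ : ℝ := (8*(K+1))⁻¹ with hδ
  have hδ0 : 0 < δ := by rw [hδ]; positivity
  have hKδ : ENNReal.ofReal (4*K) * ENNReal.ofReal δ ≤ 2⁻¹ := by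
    rw [← ENNReal.ofReal_mul (by positivity)]
    have h8 : (0:ℝ) < 8*(K+1) := by positivity
    have hle : (4*K)*δ ≤ 1/2 := by
      rw [hδ, ← div_eq_mul_inv, div_le_iff₀ h8]; linarith
    calc ENNReal.ofReal ((4*K)*δ) ≤ ENNReal.ofReal (1/2) := ENNReal.ofReal_le_ofReal hle
      _ = 2⁻¹ := by rw [one_div, ENNReal.ofReal_inv_of_pos (by norm_num), ENNReal.ofReal_ofNat]
  have main_step : ∀ t₀ t₁ : ℝ, 0 ≤ t₀ → t₁ ≤ T → t₀ ≤ t₁ → t₁ - t₀ ≤ δ → f t₀ = g t₀ →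
      ∀ t ∈ Set.Icc t₀ t₁, f t = g t := by
    intro t₀ t₁ ht₀ ht₁T ht₀₁ hlen h0 t ht
    have hsubIcc : Set.Icc t₀ t₁ ⊆ Set.Icc 0 T := fun s hs => ⟨ht₀.trans hs.1, hs.2.trans ht₁T⟩
    set Φ : ℝ → ℝ≥0∞ := fun s => ∑' x, ENNReal.ofReal |f s x - g s x| with hΦ
    set M : ℝ≥0∞ := ⨆ s : Set.Icc t₀ t₁, Φ s.1 with hM
    have hΦleM : ∀ s ∈ Set.Icc t₀ t₁, Φ s ≤ M := fun s hs =>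
      le_iSup_of_le ⟨s, hs⟩ le_rfl
    have hM2 : M ≤ 2 := by
      rw [hM]
      refine iSup_le fun z => ?_
      obtain ⟨s, hs⟩ := z
      have hsT := hsubIcc hs
      calc Φ s ≤ ∑' x, (ENNReal.ofReal (f s x) + ENNReal.ofReal (g s x)) := by
            refine ENNReal.tsum_le_tsum fun x => ?_
            refine le_trans (ENNReal.ofReal_le_ofReal ((abs_sub _ _).trans (le_of_eq ?_)))
              ENNReal.ofReal_add_le
            rw [abs_of_nonneg (hfpos s hsT x), abs_of_nonneg (hgpos s hsT x)]
        _ = 2 := by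
            rw [ENNReal.tsum_add, ofReal_tsum_eq _ (hfpos s hsT) (hfS s hsT),
              ofReal_tsum_eq _ (hgpos s hsT) (hgS s hsT), hfmass s hsT, hgmass s hsT,
              ENNReal.ofReal_one]
            norm_num
    have hkey : ∀ u ∈ Set.Icc t₀ t₁, Φ u ≤ 2⁻¹ * M := by
      intro u hu
      have hu0T : u ∈ Set.Icc 0 T := hsubIcc hu
      have hsubIoc : Set.Ioc t₀ u ⊆ Set.Icc 0 T := fun s hs =>
        ⟨ht₀.trans hs.1.le, hs.2.trans hu0T.2⟩
      have hsubIoc' : Set.Ioc t₀ u ⊆ Set.Icc t₀ t₁ := fun s hs => ⟨hs.1.le, hs.2.trans hu.2⟩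
      have hfint := hint f hfpos hfmass hQmf t₀ u ht₀ hu.1 hu0T.2
      have hgint := hint g hgpos hgmass hQmg t₀ u ht₀ hu.1 hu0T.2
      have hΔ : ∀ ε, f u ε - g u ε =
          ∫ s in Set.Ioc t₀ u, (collOp B (f s) ε - collOp B (g s) ε) := by
        intro ε
        have hf' : ∫ s in t₀..u, collOp B (f s) ε = f u ε - f t₀ ε := by
          refine intervalIntegral.integral_eq_sub_of_hasDerivAt (f := fun s => f s ε) ?_ (hfint ε)
          intro s hsmem
          rw [Set.uIcc_of_le hu.1] at hsmem
          exact hfde s ⟨ht₀.trans hsmem.1, hsmem.2.trans hu0T.2⟩ ε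
        have hg' : ∫ s in t₀..u, collOp B (g s) ε = g u ε - g t₀ ε := by
          refine intervalIntegral.integral_eq_sub_of_hasDerivAt (f := fun s => g s ε) ?_ (hgint ε)
          intro s hsmem
          rw [Set.uIcc_of_le hu.1] at hsmem
          exact hgde s ⟨ht₀.trans hsmem.1, hsmem.2.trans hu0T.2⟩ ε
        have h0' : f t₀ ε = g t₀ ε := congrFun h0 ε
        have heq : f u ε - g u ε = (∫ s in t₀..u, collOp B (f s) ε)
            - ∫ s in t₀..u, collOp B (g s) ε := by rw [hf', hg', h0']; ring
        rw [heq, ← intervalIntegral.integral_sub (hfint ε) (hgint ε),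
          intervalIntegral.integral_of_le hu.1]
      calc Φ u = ∑' x, ENNReal.ofReal
            |∫ s in Set.Ioc t₀ u, (collOp B (f s) x - collOp B (g s) x)| :=
            tsum_congr fun x => by rw [hΔ x]
        _ ≤ ∑' x, ∫⁻ s in Set.Ioc t₀ u,
              ENNReal.ofReal |collOp B (f s) x - collOp B (g s) x| := by
            refine ENNReal.tsum_le_tsum fun x => ?_
            rw [← Real.enorm_eq_ofReal_abs]
            refine le_trans (enorm_integral_le_lintegral_enorm _) ?_
            exact lintegral_mono fun s => le_of_eq (Real.enorm_eq_ofReal_abs _)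
        _ = ∫⁻ s in Set.Ioc t₀ u, ∑' x,
              ENNReal.ofReal |collOp B (f s) x - collOp B (g s) x| := by
            refine (lintegral_tsum fun x => ?_).symm
            have h1 : AEMeasurable (fun s => collOp B (f s) x - collOp B (g s) x)
                (volume.restrict (Set.Ioc t₀ u)) :=
              ((hQmf x).mono_measure (Measure.restrict_mono hsubIoc le_rfl)).sub
                ((hQmg x).mono_measure (Measure.restrict_mono hsubIoc le_rfl))
            exact ENNReal.measurable_ofReal.comp_aemeasurable
              (measurable_abs.comp_aemeasurable h1)
        _ ≤ ∫⁻ _ in Set.Ioc t₀ u, (ENNReal.ofReal (4*K) * M) := by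
            refine lintegral_mono_ae ?_
            filter_upwards [ae_restrict_mem measurableSet_Ioc] with s hs
            have hsT := hsubIoc hs
            refine le_trans (est_sum hB0 hBsym hBsumm hK (f s) (g s) (hfpos s hsT)
              (hfS s hsT) (le_of_eq (hfmass s hsT)) (hgpos s hsT) (hgS s hsT)
              (le_of_eq (hgmass s hsT))) ?_
            exact mul_le_mul_right (hΦleM s (hsubIoc' hs)) _
        _ = ENNReal.ofReal (4*K) * M * volume (Set.Ioc t₀ u) := setLIntegral_const _ _
        _ ≤ 2⁻¹ * M := by
            rw [Real.volume_Ioc]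
            have hle : ENNReal.ofReal (u - t₀) ≤ ENNReal.ofReal δ :=
              ENNReal.ofReal_le_ofReal (by
                have := hu.1; have := hu.2; linarith)
            calc ENNReal.ofReal (4*K) * M * ENNReal.ofReal (u - t₀)
                = ENNReal.ofReal (4*K) * ENNReal.ofReal (u - t₀) * M := by ring
              _ ≤ 2⁻¹ * M := mul_le_mul_left
                  (le_trans (mul_le_mul_right hle _) hKδ) _
    have hMhalf : M ≤ 2⁻¹ * M := by
      rw [hM]
      refine iSup_le fun z => ?_
      obtain ⟨s, hs⟩ := z
      exact hkey s hs
    have hM0 : M = 0 := by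
      by_contra hne
      have hlt : M / 2 < M := ENNReal.half_lt_self hne
        (ne_top_of_le_ne_top (by norm_num) hM2)
      have heq : 2⁻¹ * M = M / 2 := by rw [ENNReal.div_eq_inv_mul]
      exact absurd (lt_of_le_of_lt (heq ▸ hMhalf) hlt) (lt_irrefl M)
    have hΦt : Φ t = 0 := le_antisymm (hM0 ▸ hΦleM t ht) zero_le
    funext ε
    have hz : ENNReal.ofReal |f t ε - g t ε| = 0 := by
      have := ENNReal.tsum_eq_zero.mp hΦt ε
      exact this
    have : |f t ε - g t ε| ≤ 0 := ENNReal.ofReal_eq_zero.mp hz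
    have : f t ε - g t ε = 0 := abs_eq_zero.mp (le_antisymm this (abs_nonneg _))
    linarith
  -- global induction
  have key : ∀ n : ℕ, ∀ t ∈ Set.Icc (0:ℝ) T, t ≤ n * δ → f t = g t := by
    intro n
    induction n with
    | zero =>
        intro t ht hle
        have : t = 0 := le_antisymm (by simpa using hle) ht.1
        rw [this, hinit]
    | succ n ih =>
        intro t ht hle
        by_cases h : t ≤ n * δ
        · exact ih t ht h
        · push_neg at h
          have hn0 : (0:ℝ) ≤ n * δ := by positivity
          have hnT : (n:ℝ) * δ ≤ T := le_of_lt (lt_of_lt_of_le h ht.2)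
          have h0 : f (n * δ) = g (n * δ) := ih (n * δ) ⟨hn0, hnT⟩ le_rfl
          refine main_step (n * δ) t hn0 ht.2 h.le ?_ h0 t ⟨h.le, le_rfl⟩
          have : (t:ℝ) ≤ (n+1) * δ := by push_cast at hle ⊢; linarith
          linarith
  intro t ht
  obtain ⟨n, hn⟩ := exists_nat_ge (T / δ)
  have hTn : T ≤ n * δ := by
    rw [div_le_iff₀ hδ0] at hn
    exact hn
  exact key n t ht (ht.2.trans hTn)
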